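/- Let X, X', Y, Y' be independent real-valued random variables. Then the Kolmogorov-Smirnov distance satisfies d_KS(X+Y, X'+Y') ≤ d_KS(X, X') + d_KS(Y, Y'). -/

import Mathlib

open MeasureTheory ProbabilityTheory

/-- The Kolmogorov–Smirnov distance between two random variables. -/
noncomputable def dKS {Ω : Type*} [MeasureSpace Ω] (A B : Ω → ℝ) : ℝ :=
  ⨆ s : ℝ, |(ℙ {ω | A ω ≤ s}).toReal - (ℙ {ω | B ω ≤ s}).toReal|

lemma dKS_bdd {Ω : Type*} [MeasureSpace Ω] [IsProbabilityMeasure (ℙ : Measure Ω)]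
    (A B : Ω → ℝ) :
    BddAbove (Set.range fun s : ℝ =>
      |(ℙ {ω | A ω ≤ s}).toReal - (ℙ {ω | B ω ≤ s}).toReal|) := by
  refine ⟨2, ?_⟩
  rintro x ⟨s, rfl⟩
  have h1 : (ℙ {ω | A ω ≤ s}).toReal ≤ 1 := by
    exact ENNReal.toReal_le_of_le_ofReal one_pos.le (by simpa using prob_le_one)
  have h2 : (ℙ {ω | B ω ≤ s}).toReal ≤ 1 := by
    exact ENNReal.toReal_le_of_le_ofReal one_pos.le (by simpa using prob_le_one)
  calc |(ℙ {ω | A ω ≤ s}).toReal - (ℙ {ω | B ω ≤ s}).toReal|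
      ≤ |(ℙ {ω | A ω ≤ s}).toReal| + |(ℙ {ω | B ω ≤ s}).toReal| := abs_sub _ _
    _ ≤ 1 + 1 := by
        gcongr <;> rw [abs_of_nonneg ENNReal.toReal_nonneg] <;> assumption
    _ = 2 := by norm_num

lemma le_dKS {Ω : Type*} [MeasureSpace Ω] [IsProbabilityMeasure (ℙ : Measure Ω)]
    (A B : Ω → ℝ) (s : ℝ) :
    |(ℙ {ω | A ω ≤ s}).toReal - (ℙ {ω | B ω ≤ s}).toReal| ≤ dKS A B :=
  le_ciSup (dKS_bdd A B) s

lemma dKS_triangle {Ω : Type*} [MeasureSpace Ω] [IsProbabilityMeasure (ℙ : Measure Ω)]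
    (A B C : Ω → ℝ) : dKS A C ≤ dKS A B + dKS B C := by
  refine ciSup_le fun s => ?_
  calc |(ℙ {ω | A ω ≤ s}).toReal - (ℙ {ω | C ω ≤ s}).toReal|
      ≤ |(ℙ {ω | A ω ≤ s}).toReal - (ℙ {ω | B ω ≤ s}).toReal| +
        |(ℙ {ω | B ω ≤ s}).toReal - (ℙ {ω | C ω ≤ s}).toReal| := abs_sub_le _ _ _
    _ ≤ dKS A B + dKS B C := add_le_add (le_dKS A B s) (le_dKS B C s)

lemma prob_add_le_eq {Ω : Type*} [MeasureSpace Ω] [IsProbabilityMeasure (ℙ : Measure Ω)]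
    (A B : Ω → ℝ) (hA : Measurable A) (hB : Measurable B)
    (h : IndepFun A B ℙ) (s : ℝ) :
    ℙ {ω | A ω + B ω ≤ s} =
      ∫⁻ y, (Measure.map A ℙ) (Set.Iic (s - y)) ∂(Measure.map B ℙ) := by
  have h' : IndepFun B A ℙ := h.symm
  have hmap : Measure.map (fun ω => (B ω, A ω)) ℙ = (Measure.map B ℙ).prod (Measure.map A ℙ) :=
    (indepFun_iff_map_prod_eq_prod_map_map hB.aemeasurable hA.aemeasurable).1 h'
  have hset : MeasurableSet {p : ℝ × ℝ | p.2 + p.1 ≤ s} :=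
    measurableSet_le (measurable_snd.add measurable_fst) measurable_const
  have : ℙ {ω | A ω + B ω ≤ s} =
      (Measure.map (fun ω => (B ω, A ω)) ℙ) {p : ℝ × ℝ | p.2 + p.1 ≤ s} := by
    rw [Measure.map_apply (hB.prodMk hA) hset]
    rfl
  rw [this, hmap, Measure.prod_apply hset]
  congr 1
  ext y
  congr 1
  ext x
  simp [Set.mem_Iic]
  constructor <;> intro h <;> linarith

lemma dKS_add_right {Ω : Type*} [MeasureSpace Ω] [IsProbabilityMeasure (ℙ : Measure Ω)]
    (A A' B : Ω → ℝ) (hA : Measurable A) (hA' : Measurable A') (hB : Measurable B)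
    (h1 : IndepFun A B ℙ) (h2 : IndepFun A' B ℙ) :
    dKS (fun ω => A ω + B ω) (fun ω => A' ω + B ω) ≤ dKS A A' := by
  refine ciSup_le fun s => ?_
  set ν := Measure.map B ℙ with hν
  have hνprob : IsProbabilityMeasure ν := Measure.isProbabilityMeasure_map hB.aemeasurable
  have hμprob : IsProbabilityMeasure (Measure.map A ℙ) := Measure.isProbabilityMeasure_map hA.aemeasurable
  have hμ'prob : IsProbabilityMeasure (Measure.map A' ℙ) := Measure.isProbabilityMeasure_map hA'.aemeasurable
  have e1 := prob_add_le_eq A B hA hB h1 s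
  have e2 := prob_add_le_eq A' B hA' hB h2 s
  have meas1 : Measurable fun y => (Measure.map A ℙ) (Set.Iic (s - y)) := by
    have hset : MeasurableSet {p : ℝ × ℝ | p.2 ≤ s - p.1} :=
      measurableSet_le measurable_snd (measurable_const.sub measurable_fst)
    have := measurable_measure_prodMk_left (ν := Measure.map A ℙ) hset
    convert this using 2 with y
    rfl
  have meas2 : Measurable fun y => (Measure.map A' ℙ) (Set.Iic (s - y)) := by
    have hset : MeasurableSet {p : ℝ × ℝ | p.2 ≤ s - p.1} :=
      measurableSet_le measurable_snd (measurable_const.sub measurable_fst)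
    have := measurable_measure_prodMk_left (ν := Measure.map A' ℙ) hset
    convert this using 2 with y
    rfl
  -- convert to real integrals
  have i1 : (ℙ {ω | A ω + B ω ≤ s}).toReal
      = ∫ y, ((Measure.map A ℙ) (Set.Iic (s - y))).toReal ∂ν := by
    rw [e1, ← integral_toReal meas1.aemeasurable]
    exact Filter.Eventually.of_forall fun y => measure_lt_top _ _
  have i2 : (ℙ {ω | A' ω + B ω ≤ s}).toReal
      = ∫ y, ((Measure.map A' ℙ) (Set.Iic (s - y))).toReal ∂ν := by
    rw [e2, ← integral_toReal meas2.aemeasurable]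
    exact Filter.Eventually.of_forall fun y => measure_lt_top _ _
  have int1 : Integrable (fun y => ((Measure.map A ℙ) (Set.Iic (s - y))).toReal) ν := by
    refine Integrable.mono' (integrable_const 1)
      meas1.ennreal_toReal.aestronglyMeasurable
      (Filter.Eventually.of_forall fun y => ?_)
    rw [Real.norm_eq_abs, abs_of_nonneg ENNReal.toReal_nonneg]
    exact ENNReal.toReal_le_of_le_ofReal one_pos.le (by simpa using prob_le_one)
  have int2 : Integrable (fun y => ((Measure.map A' ℙ) (Set.Iic (s - y))).toReal) ν := by
    refine Integrable.mono' (integrable_const 1)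
      meas2.ennreal_toReal.aestronglyMeasurable
      (Filter.Eventually.of_forall fun y => ?_)
    rw [Real.norm_eq_abs, abs_of_nonneg ENNReal.toReal_nonneg]
    exact ENNReal.toReal_le_of_le_ofReal one_pos.le (by simpa using prob_le_one)
  have key : ∀ y : ℝ, |((Measure.map A ℙ) (Set.Iic (s - y))).toReal
      - ((Measure.map A' ℙ) (Set.Iic (s - y))).toReal| ≤ dKS A A' := by
    intro y
    have hA1 : (Measure.map A ℙ) (Set.Iic (s - y)) = ℙ {ω | A ω ≤ s - y} := by
      rw [Measure.map_apply hA measurableSet_Iic]; rfl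
    have hA2 : (Measure.map A' ℙ) (Set.Iic (s - y)) = ℙ {ω | A' ω ≤ s - y} := by
      rw [Measure.map_apply hA' measurableSet_Iic]; rfl
    rw [hA1, hA2]
    exact le_dKS A A' (s - y)
  calc |(ℙ {ω | A ω + B ω ≤ s}).toReal - (ℙ {ω | A' ω + B ω ≤ s}).toReal|
      = |∫ y, (((Measure.map A ℙ) (Set.Iic (s - y))).toReal
          - ((Measure.map A' ℙ) (Set.Iic (s - y))).toReal) ∂ν| := by
        rw [i1, i2, integral_sub int1 int2]
    _ ≤ ∫ y, |((Measure.map A ℙ) (Set.Iic (s - y))).toReal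
          - ((Measure.map A' ℙ) (Set.Iic (s - y))).toReal| ∂ν := by
        simpa using norm_integral_le_integral_norm (μ := ν)
          (f := fun y => ((Measure.map A ℙ) (Set.Iic (s - y))).toReal
            - ((Measure.map A' ℙ) (Set.Iic (s - y))).toReal)
    _ ≤ ∫ _, dKS A A' ∂ν := by
        refine integral_mono ((int1.sub int2).abs) (integrable_const _) fun y => key y
    _ = dKS A A' := by simp

/-- Parallelogram inequality for the Kolmogorov–Smirnov distance:
if `X, X', Y, Y'` are (mutually) independent, then
`d_KS(X+Y, X'+Y') ≤ d_KS(X,X') + d_KS(Y,Y')`. -/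
theorem dKS_add_le {Ω : Type*} [MeasureSpace Ω] [IsProbabilityMeasure (ℙ : Measure Ω)]
    (X X' Y Y' : Ω → ℝ) (hX : Measurable X) (hX' : Measurable X')
    (hY : Measurable Y) (hY' : Measurable Y')
    (hindep : iIndepFun ![X, X', Y, Y'] ℙ) :
    dKS (fun ω => X ω + Y ω) (fun ω => X' ω + Y' ω) ≤ dKS X X' + dKS Y Y' := by
  have hXY : IndepFun X Y ℙ := by
    have := hindep.indepFun (i := 0) (j := 2) (by decide)
    simpa using this
  have hX'Y : IndepFun X' Y ℙ := by
    have := hindep.indepFun (i := 1) (j := 2) (by decide)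
    simpa using this
  have hYX' : IndepFun Y X' ℙ := hX'Y.symm
  have hY'X' : IndepFun Y' X' ℙ := by
    have := hindep.indepFun (i := 3) (j := 1) (by decide)
    simpa using this
  have h1 : dKS (fun ω => X ω + Y ω) (fun ω => X' ω + Y ω) ≤ dKS X X' :=
    dKS_add_right X X' Y hX hX' hY hXY hX'Y
  have h2 : dKS (fun ω => X' ω + Y ω) (fun ω => X' ω + Y' ω) ≤ dKS Y Y' := by
    have := dKS_add_right Y Y' X' hY hY' hX' hYX' hY'X'
    have heq : dKS (fun ω => X' ω + Y ω) (fun ω => X' ω + Y' ω)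
        = dKS (fun ω => Y ω + X' ω) (fun ω => Y' ω + X' ω) := by
      simp only [dKS, add_comm]
    rw [heq]; exact this
  calc dKS (fun ω => X ω + Y ω) (fun ω => X' ω + Y' ω)
      ≤ dKS (fun ω => X ω + Y ω) (fun ω => X' ω + Y ω)
        + dKS (fun ω => X' ω + Y ω) (fun ω => X' ω + Y' ω) := dKS_triangle _ _ _
    _ ≤ dKS X X' + dKS Y Y' := add_le_add h1 h2
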